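/- In the constructed instance for sacrificing return for less volatility, if a subset T ⊆ {1,…,m} with |T| = k meets the performance bound, then T also meets the volatility bound, i.e., Δ(T,t) ≤ β·Δ(M,t) for all t = 2,…,f. -/

import Mathlib

lemma sum_sq_dev_le (t : ℕ) (ht : 1 ≤ t) (r : ℕ → ℝ) :
    ∑ i ∈ Finset.Icc 1 t, (r i - (∑ j ∈ Finset.Icc 1 t, r j) / t) ^ 2 ≤
      ∑ i ∈ Finset.Icc 1 t, (r i) ^ 2 := by
  have ht' : (0:ℝ) < t := by exact_mod_cast ht
  set S := ∑ j ∈ Finset.Icc 1 t, r j with hS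
  set μ := S / t with hμ
  have hcard : (Finset.Icc 1 t).card = t := by rw [Nat.card_Icc]; omega
  have hexp : ∑ i ∈ Finset.Icc 1 t, (r i - μ) ^ 2
      = (∑ i ∈ Finset.Icc 1 t, (r i) ^ 2) - 2 * μ * S + t * μ ^ 2 := by
    have : ∀ i ∈ Finset.Icc 1 t, (r i - μ) ^ 2 = (r i) ^ 2 - (2 * μ) * r i + μ ^ 2 :=
      fun i _ => by ring
    rw [Finset.sum_congr rfl this, Finset.sum_add_distrib, Finset.sum_sub_distrib,
      ← Finset.mul_sum, Finset.sum_const, hcard, ← hS]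
    ring
  rw [hexp]
  have h1 : (t:ℝ) * μ ^ 2 = S ^ 2 / t := by rw [hμ]; field_simp
  have h2 : 2 * μ * S = 2 * (S ^ 2 / t) := by rw [hμ]; field_simp
  rw [h1, h2]
  have : 0 ≤ S ^ 2 / t := by positivity
  linarith



/-- Price-weighted index of the set of stocks `T` at time `t`,
given prices `Sp`. -/
noncomputable def phi1 (Sp : ℕ → ℕ → ℝ) (T : Finset ℕ) (t : ℕ) : ℝ :=
  (∑ i ∈ T, Sp i t) / T.card

/-- One-period return of the set of stocks `T` at time `t ≥ 1`. -/
noncomputable def ret (Sp : ℕ → ℕ → ℝ) (T : Finset ℕ) (t : ℕ) : ℝ :=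
  Real.log (phi1 Sp T t / phi1 Sp T (t - 1))

/-- Average return of the set of stocks `T` up to time `t ≥ 1`. -/
noncomputable def avgRet (Sp : ℕ → ℕ → ℝ) (T : Finset ℕ) (t : ℕ) : ℝ :=
  (∑ i ∈ Finset.Icc 1 t, ret Sp T i) / t

/-- Volatility of the set of stocks `T` up to time `t ≥ 2`. -/
noncomputable def vol (Sp : ℕ → ℕ → ℝ) (T : Finset ℕ) (t : ℕ) : ℝ :=
  Real.sqrt ((∑ i ∈ Finset.Icc 1 t, (ret Sp T i - avgRet Sp T t) ^ 2) /
    ((t : ℝ) - 1))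

set_option maxHeartbeats 4000000 in
theorem stmt_7
    -- the minimum-cover instance
    (s n K : ℕ) (hs : 1 ≤ s) (C : ℕ → Finset ℕ)
    (hC : ∀ i ∈ Finset.Icc 1 n, C i ⊆ Finset.Icc 1 s)
    (hK2 : 2 ≤ K) (hKn : K < n)
    -- the performance and volatility parameters
    (α β : ℝ) (hα : 0 < α) (hβ : 0 < β)
    -- constants of the construction
    (k P q B m f : ℕ) (hk : k = K)
    (hP : P = max (2 * (k + 1)) (2 * s))
    (hq : (q : ℤ) = ⌈max (1 + 4 / β) (Real.log (2 / α) / Real.log k)⌉)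
    (hB : (B : ℤ) = ⌈α * (k : ℝ) ^ q⌉)
    (hm : m = n * B) (hf : f = P + s)
    (v₁ v₂ : ℝ) (hv₁ : v₁ = (B : ℝ) - 1) (hv₂ : v₂ = (k : ℝ) * ((B : ℝ) - 1))
    -- the constructed prices
    (Sp : ℕ → ℕ → ℝ)
    (h0 : ∀ i ∈ Finset.Icc 1 m, Sp i 0 = v₁)
    (hpad1 : ∀ t, 1 ≤ t → t ≤ P → ∀ i ∈ Finset.Icc 1 n, Sp i t = v₁)
    (hpadEven : ∀ t, 1 ≤ t → t ≤ P → t % 2 = 0 →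
      Sp (min (n + t / 2) m) t =
        ((m : ℝ) - n) * ((⌊(B : ℝ) / α⌋ : ℤ) - 1) ∧
      ∀ i, n < i → i ≤ m → i ≠ min (n + t / 2) m → Sp i t = 0)
    (hpadOdd : ∀ t, 1 ≤ t → t ≤ P → t % 2 = 1 →
      ∀ i, n < i → i ≤ m → Sp i t = 0)
    (hcode : ∀ t, P < t → t ≤ f →
      (∀ i ∈ Finset.Icc 1 n, Sp i t = if t - P ∈ C i then v₂ else 0) ∧
      (∀ i, n < i → i < m → Sp i t = 0) ∧
      Sp m t = ((m : ℝ) - n) * ((⌊(B : ℝ) / α⌋ : ℤ) - (k : ℝ)) +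
        (((Finset.Icc 1 n).filter (fun i => t - P ∉ C i)).card : ℝ) * v₂) :
    -- statement 7
    ∀ T ⊆ Finset.Icc 1 m, T.card = k →
      (∀ t ∈ Finset.Icc 1 f,
        phi1 Sp T t / phi1 Sp T 0 ≥
          α * (phi1 Sp (Finset.Icc 1 m) t / phi1 Sp (Finset.Icc 1 m) 0)) →
      ∀ t ∈ Finset.Icc 2 f,
        vol Sp T t ≤ β * vol Sp (Finset.Icc 1 m) t := by
  -- ## numeric facts
  have hk2 : 2 ≤ k := hk ▸ hK2
  have hkn : k < n := hk ▸ hKn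
  have hk2r : (2:ℝ) ≤ k := by exact_mod_cast hk2
  have hk0r : (0:ℝ) < k := by linarith
  have hqge : max (1 + 4 / β) (Real.log (2 / α) / Real.log k) ≤ (q:ℝ) := by
    have h1 : ((q:ℤ):ℝ) = (q:ℝ) := by push_cast; ring
    rw [← h1, hq]
    exact Int.le_ceil _
  have hq1 : (1:ℝ) + 4/β ≤ q := le_trans (le_max_left _ _) hqge
  have hq2 : 2 ≤ q := by
    have h4 : 0 < 4/β := by positivity
    have : (1:ℝ) < q := by linarith
    have : 1 < q := by exact_mod_cast this
    omega
  have hβq : 4 ≤ β * (q:ℝ) := by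
    have h4 : 4/β ≤ (q:ℝ) := by linarith
    calc (4:ℝ) = β * (4/β) := by field_simp
    _ ≤ β * q := by exact mul_le_mul_of_nonneg_left h4 hβ.le
  have hlogk : 0 < Real.log k := Real.log_pos (by linarith)
  have hkq2 : 2/α ≤ (k:ℝ)^q := by
    have h1 : Real.log (2/α) / Real.log k ≤ (q:ℝ) := le_trans (le_max_right _ _) hqge
    have h2 : Real.log (2/α) ≤ (q:ℝ) * Real.log k := (div_le_iff₀ hlogk).mp h1
    have h3 : Real.log (2/α) ≤ Real.log ((k:ℝ)^q) := by rw [Real.log_pow]; push_cast; linarith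
    have h4 : (0:ℝ) < 2/α := by positivity
    have h5 : (0:ℝ) < (k:ℝ)^q := by positivity
    exact (Real.log_le_log_iff h4 h5).mp h3
  have hBreal : α * (k:ℝ)^q ≤ (B:ℝ) := by
    have h1 := Int.le_ceil (α * (k:ℝ)^q)
    rw [← hB] at h1
    exact_mod_cast h1
  have hB2r : (2:ℝ) ≤ (B:ℝ) := by
    have : α * (2/α) ≤ α * (k:ℝ)^q := mul_le_mul_of_nonneg_left hkq2 hα.le
    have h2 : α * (2/α) = 2 := by field_simp
    linarith
  have hB2 : 2 ≤ B := by exact_mod_cast hB2r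
  have hkqk2 : (k:ℝ)^2 ≤ (k:ℝ)^q := pow_le_pow_right₀ (by linarith) hq2
  have hBk2 : α * (k:ℝ)^2 ≤ (B:ℝ) := le_trans (mul_le_mul_of_nonneg_left hkqk2 hα.le) hBreal
  set Fr : ℝ := ((⌊(B : ℝ) / α⌋ : ℤ) : ℝ) with hFrdef
  have hFrkq : (k:ℝ)^q ≤ Fr := by
    have h1 : ((k:ℝ))^q ≤ (B:ℝ)/α := (le_div_iff₀ hα).mpr (by linarith [hBreal])
    have h2 : ((k^q : ℕ) : ℤ) ≤ ⌊(B:ℝ)/α⌋ := Int.le_floor.mpr (by push_cast; exact h1)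
    rw [hFrdef]
    exact_mod_cast h2
  have hFr4 : (4:ℝ) ≤ Fr := by nlinarith
  have hαFr : (B:ℝ) - α < α * Fr := by
    have h1 : (B:ℝ)/α - 1 < Fr := Int.sub_one_lt_floor _
    have h2 : α * ((B:ℝ)/α - 1) < α * Fr := mul_lt_mul_of_pos_left h1 hα
    have h3 : α * ((B:ℝ)/α - 1) = (B:ℝ) - α := by field_simp
    linarith
  have hv1pos : 0 < v₁ := by rw [hv₁]; linarith
  have hn1 : 1 ≤ n := by omega
  have hm2n : 2 * n ≤ m := by
    calc 2 * n = n * 2 := by ring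
    _ ≤ n * B := Nat.mul_le_mul_left n hB2
    _ = m := hm.symm
  have hnm : n < m := by omega
  have hmr : (m:ℝ) = (n:ℝ) * B := by exact_mod_cast hm
  have hn0r : (0:ℝ) < n := by exact_mod_cast hn1
  have hB0r : (0:ℝ) < B := by linarith
  have hP2k : 2 * (k + 1) ≤ P := hP ▸ le_max_left _ _
  have hP2s : 2 * s ≤ P := hP ▸ le_max_right _ _
  have hPeven : P % 2 = 0 := by omega
  have hP4 : 4 ≤ P := by omega
  have hPs2 : s + 2 ≤ P := by omega
  -- ## market index values
  have hsplit : ∀ g : ℕ → ℝ, ∑ i ∈ Finset.Icc 1 m, g i =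
      ∑ i ∈ Finset.Icc 1 n, g i + ∑ i ∈ Finset.Ioc n m, g i := by
    intro g
    have hIcc : ∀ x : ℕ, Finset.Icc 1 x = Finset.Ioc 0 x := fun x => by
      rw [← Finset.Icc_add_one_left_eq_Ioc, zero_add]
    rw [hIcc, hIcc]
    exact (Finset.sum_Ioc_consecutive g (Nat.zero_le n) hnm.le).symm
  have hcardm : ((Finset.Icc 1 m).card : ℝ) = (m:ℝ) := by
    rw [Nat.card_Icc, Nat.add_sub_cancel]
  have hcardm' : (Finset.Icc 1 m).card = m := by rw [Nat.card_Icc, Nat.add_sub_cancel]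

  have hm0r : (0:ℝ) < m := by rw [hmr]; positivity
  have hmne : ((m:ℝ)) ≠ 0 := ne_of_gt hm0r
  have hM0 : phi1 Sp (Finset.Icc 1 m) 0 = v₁ := by
    unfold phi1
    rw [Finset.sum_congr rfl h0, Finset.sum_const, hcardm', nsmul_eq_mul]
    field_simp
  have hModd : ∀ u, 1 ≤ u → u ≤ P → u % 2 = 1 →
      phi1 Sp (Finset.Icc 1 m) u = v₁ / B := by
    intro u h1 h2 h3
    unfold phi1
    rw [hsplit, Finset.sum_congr rfl (hpad1 u h1 h2), Finset.sum_const, Nat.card_Icc,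
      Nat.add_sub_cancel, nsmul_eq_mul,
      Finset.sum_eq_zero (fun i hi => by
        simp only [Finset.mem_Ioc] at hi
        exact hpadOdd u h1 h2 h3 i hi.1 hi.2), add_zero, hcardm', hmr]
    rw [hv₁]
    field_simp
  have hMeven : ∀ u, 1 ≤ u → u ≤ P → u % 2 = 0 →
      phi1 Sp (Finset.Icc 1 m) u = v₁ * Fr / B := by
    intro u h1 h2 h3
    obtain ⟨hA, hz⟩ := hpadEven u h1 h2 h3
    have hu2 : 2 ≤ u := by omega
    have hi₀ : min (n + u / 2) m ∈ Finset.Ioc n m := by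
      simp only [Finset.mem_Ioc]
      omega
    unfold phi1
    rw [hsplit, Finset.sum_congr rfl (hpad1 u h1 h2), Finset.sum_const, Nat.card_Icc,
      Nat.add_sub_cancel, nsmul_eq_mul,
      Finset.sum_eq_single_of_mem _ hi₀ (fun b hb hne => by
        simp only [Finset.mem_Ioc] at hb
        exact hz b hb.1 hb.2 hne), hA, hcardm', hmr]
    rw [hv₁]
    have hne : (n:ℝ) ≠ 0 := ne_of_gt hn0r
    have hBne : (B:ℝ) ≠ 0 := ne_of_gt hB0r
    field_simp
    ring
  have hMcode : ∀ u, P < u → u ≤ f →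
      phi1 Sp (Finset.Icc 1 m) u = v₁ * Fr / B := by
    intro u h1 h2
    obtain ⟨hc1, hc2, hc3⟩ := hcode u h1 h2
    have hmI : m ∈ Finset.Ioc n m := by simp only [Finset.mem_Ioc]; omega
    have hfil : (((Finset.Icc 1 n).filter (fun i => u - P ∈ C i)).card : ℝ)
        + (((Finset.Icc 1 n).filter (fun i => u - P ∉ C i)).card : ℝ) = (n:ℝ) := by
      have := Finset.card_filter_add_card_filter_not
        (s := Finset.Icc 1 n) (p := fun i => u - P ∈ C i)
      rw [Nat.card_Icc, Nat.add_sub_cancel] at this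
      exact_mod_cast this
    unfold phi1
    rw [hsplit, Finset.sum_congr rfl hc1, Finset.sum_ite, Finset.sum_const,
      Finset.sum_const_zero, add_zero, nsmul_eq_mul,
      Finset.sum_eq_single_of_mem _ hmI (fun b hb hne => by
        simp only [Finset.mem_Ioc] at hb
        exact hc2 b hb.1 (lt_of_le_of_ne hb.2 hne)), hc3, hcardm', hmr]
    rw [hv₁, hv₂]
    have hBne : (B:ℝ) ≠ 0 := ne_of_gt hB0r
    rw [div_eq_div_iff (by positivity) hB0r.ne']
    linear_combination ((k:ℝ) * ((B:ℝ) - 1) * (B:ℝ)) * hfil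
  have hv1ne : v₁ ≠ 0 := ne_of_gt hv1pos
  have hBne : (B:ℝ) ≠ 0 := ne_of_gt hB0r
  have hFrne : Fr ≠ 0 := by linarith
  have hretMeven : ∀ j, 1 ≤ j → 2 * j ≤ P →
      ret Sp (Finset.Icc 1 m) (2 * j) = Real.log Fr := by
    intro j h1 h2
    unfold ret
    have he : phi1 Sp (Finset.Icc 1 m) (2 * j) = v₁ * Fr / B :=
      hMeven (2 * j) (by omega) h2 (by omega)
    have ho : phi1 Sp (Finset.Icc 1 m) (2 * j - 1) = v₁ / B :=
      hModd (2 * j - 1) (by omega) (by omega) (by omega)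
    rw [he, ho]
    congr 1
    field_simp
  have hretModd : ∀ j, 1 ≤ j → 2 * j + 1 ≤ P →
      ret Sp (Finset.Icc 1 m) (2 * j + 1) = -Real.log Fr := by
    intro j h1 h2
    unfold ret
    have ho : phi1 Sp (Finset.Icc 1 m) (2 * j + 1) = v₁ / B :=
      hModd (2 * j + 1) (by omega) h2 (by omega)
    have he : phi1 Sp (Finset.Icc 1 m) (2 * j + 1 - 1) = v₁ * Fr / B := by
      have : 2 * j + 1 - 1 = 2 * j := by omega
      rw [this]
      exact hMeven (2 * j) (by omega) (by omega) (by omega)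
    rw [ho, he]
    rw [show v₁ / (B:ℝ) / (v₁ * Fr / B) = Fr⁻¹ by field_simp, Real.log_inv]
  -- ## the portfolio
  intro T hT hTk hperf
  have hkne : (k:ℝ) ≠ 0 := ne_of_gt hk0r
  have hT0 : phi1 Sp T 0 = v₁ := by
    unfold phi1
    rw [Finset.sum_congr rfl (fun i hi => h0 i (hT hi)), Finset.sum_const, hTk,
      nsmul_eq_mul]
    field_simp
  -- pigeonhole: some special row is missed by T
  have hpigeon : ∃ j₀, 1 ≤ j₀ ∧ j₀ ≤ k + 1 ∧ (n + j₀) ∉ T := by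
    by_contra h
    push_neg at h
    have hsubset : (Finset.Icc 1 (k + 1)).image (fun j => n + j) ⊆ T := by
      intro x hx
      simp only [Finset.mem_image, Finset.mem_Icc] at hx
      obtain ⟨j, ⟨hj1, hj2⟩, rfl⟩ := hx
      exact h j hj1 hj2
    have hcardim : ((Finset.Icc 1 (k + 1)).image (fun j => n + j)).card = k + 1 := by
      rw [Finset.card_image_of_injective _ (fun a b hab => by omega), Nat.card_Icc]
      omega
    have := Finset.card_le_card hsubset
    rw [hcardim, hTk] at this
    omega
  obtain ⟨j₀, hj₀1, hj₀2, hj₀T⟩ := hpigeon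
  have ht₀1 : 1 ≤ 2 * j₀ := by omega
  have ht₀P : 2 * j₀ ≤ P := by omega
  have ht₀e : (2 * j₀) % 2 = 0 := by omega
  obtain ⟨hA₀, hz₀⟩ := hpadEven (2 * j₀) ht₀1 ht₀P ht₀e
  have hmin₀ : min (n + (2 * j₀) / 2) m = n + j₀ := by omega
  -- T consists of coding rows only
  have hsubn : ∀ i ∈ T, i ≤ n := by
    by_contra hcon
    push_neg at hcon
    obtain ⟨i₁, hi₁T, hi₁n⟩ := hcon
    set T' := T.filter (fun i => i ≤ n) with hT'
    have hT'lt : T'.card < k := by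
      rw [← hTk]
      refine Finset.card_lt_card ?_
      rw [Finset.ssubset_iff_of_subset (Finset.filter_subset _ _)]
      exact ⟨i₁, hi₁T, by simp [hT']; omega⟩
    have hsum : ∑ i ∈ T, Sp i (2 * j₀) = T'.card * v₁ := by
      have hstep : ∀ i ∈ T, Sp i (2 * j₀) = if i ≤ n then v₁ else 0 := by
        intro i hi
        by_cases hin : i ≤ n
        · rw [if_pos hin]
          have h1i : 1 ≤ i := by
            have := hT hi
            simp only [Finset.mem_Icc] at this
            omega
          exact hpad1 (2 * j₀) ht₀1 ht₀P i (Finset.mem_Icc.mpr ⟨h1i, hin⟩)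
        · rw [if_neg hin]
          have him : i ≤ m := by
            have := hT hi
            simp only [Finset.mem_Icc] at this
            omega
          refine hz₀ i (by omega) him ?_
          rw [hmin₀]
          intro hcontra
          exact hj₀T (hcontra ▸ hi)
      rw [Finset.sum_congr rfl hstep, Finset.sum_ite, Finset.sum_const,
        Finset.sum_const_zero, add_zero, nsmul_eq_mul]
    have hperf₀ := hperf (2 * j₀) (Finset.mem_Icc.mpr ⟨ht₀1, by omega⟩)
    rw [hT0, hM0] at hperf₀
    rw [hMeven (2 * j₀) ht₀1 ht₀P ht₀e] at hperf₀
    unfold phi1 at hperf₀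
    rw [hsum, hTk] at hperf₀
    have hL : (T'.card : ℝ) * v₁ / (k:ℝ) / v₁ = (T'.card : ℝ) / k := by field_simp
    have hR : α * (v₁ * Fr / (B:ℝ) / v₁) = α * Fr / B := by field_simp
    rw [hL, hR] at hperf₀
    have hclear : α * Fr * (k:ℝ) ≤ (T'.card : ℝ) * B :=
      (div_le_div_iff₀ hB0r hk0r).mp hperf₀
    have hcard_r : (T'.card : ℝ) ≤ (k:ℝ) - 1 := by
      have : T'.card ≤ k - 1 := by omega
      have h2 : ((T'.card : ℕ) : ℝ) ≤ ((k - 1 : ℕ) : ℝ) := by exact_mod_cast this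
      rw [Nat.cast_sub (by omega)] at h2
      exact_mod_cast h2
    -- (B-α)k < αFr k ≤ c B ≤ (k-1) B ⇒ B < α k; but B ≥ α k² ⇒ contradiction
    have hstep1 : ((B:ℝ) - α) * k < (T'.card : ℝ) * B :=
      lt_of_lt_of_le (mul_lt_mul_of_pos_right hαFr hk0r) hclear
    have hstep2 : (T'.card : ℝ) * B ≤ ((k:ℝ) - 1) * B :=
      mul_le_mul_of_nonneg_right hcard_r hB0r.le
    have hBαk : (B:ℝ) < α * k := by nlinarith
    nlinarith [hBk2, hk2r, hα]
  have hTn : ∀ i ∈ T, i ∈ Finset.Icc 1 n := by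
    intro i hi
    have := hT hi
    simp only [Finset.mem_Icc] at this ⊢
    exact ⟨this.1, hsubn i hi⟩
  have hTpad : ∀ u, u ≤ P → phi1 Sp T u = v₁ := by
    intro u hu
    rcases Nat.eq_zero_or_pos u with h | h
    · rw [h]; exact hT0
    · unfold phi1
      rw [Finset.sum_congr rfl (fun i hi => hpad1 u h hu i (hTn i hi)),
        Finset.sum_const, hTk, nsmul_eq_mul]
      field_simp
  set cf : ℕ → ℕ := fun u => (T.filter (fun i => u - P ∈ C i)).card with hcf
  have hTcode : ∀ u, P < u → u ≤ f → phi1 Sp T u = (cf u) * v₁ := by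
    intro u h1 h2
    unfold phi1
    rw [Finset.sum_congr rfl (fun i hi => (hcode u h1 h2).1 i (hTn i hi)),
      Finset.sum_ite, Finset.sum_const, Finset.sum_const_zero, add_zero,
      nsmul_eq_mul, hTk, hv₂, hv₁]
    rw [hcf]
    field_simp
  have hcfk : ∀ u, cf u ≤ k := by
    intro u
    rw [hcf, ← hTk]
    exact Finset.card_filter_le _ _
  have hcf1 : ∀ u, P < u → u ≤ f → 1 ≤ cf u := by
    intro u h1 h2
    by_contra hcon
    have hcf0 : cf u = 0 := by omega
    have hperfu := hperf u (Finset.mem_Icc.mpr ⟨by omega, h2⟩)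
    rw [hT0, hM0, hTcode u h1 h2, hMcode u h1 h2, hcf0] at hperfu
    have hL0 : ((0:ℕ):ℝ) * v₁ / v₁ = 0 := by simp
    rw [hL0] at hperfu
    have hpos : 0 < α * (v₁ * Fr / (B:ℝ) / v₁) := by
      rw [show v₁ * Fr / (B:ℝ) / v₁ = Fr / B by field_simp]
      positivity
    linarith
  have hretT0 : ∀ u, 1 ≤ u → u ≤ P → ret Sp T u = 0 := by
    intro u h1 h2
    unfold ret
    rw [hTpad u h2, hTpad (u - 1) (by omega), div_self hv1ne, Real.log_one]
  have hretTbound : ∀ u, P < u → u ≤ f →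
      (ret Sp T u) ^ 2 ≤ (Real.log k) ^ 2 := by
    intro u h1 h2
    have hprev : ∃ d : ℕ, 1 ≤ d ∧ d ≤ k ∧ phi1 Sp T (u - 1) = (d:ℝ) * v₁ := by
      by_cases hcase : P < u - 1
      · exact ⟨cf (u - 1), hcf1 _ hcase (by omega), hcfk _, hTcode _ hcase (by omega)⟩
      · refine ⟨1, le_refl 1, by omega, ?_⟩
        rw [hTpad (u - 1) (by omega)]
        norm_num
    obtain ⟨d, hd1, hdk, hdeq⟩ := hprev
    have hc1 : 1 ≤ cf u := hcf1 u h1 h2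
    have hck : cf u ≤ k := hcfk u
    have hc1r : (1:ℝ) ≤ (cf u : ℝ) := by exact_mod_cast hc1
    have hckr : ((cf u : ℕ):ℝ) ≤ (k:ℝ) := by exact_mod_cast hck
    have hd1r : (1:ℝ) ≤ (d:ℝ) := by exact_mod_cast hd1
    have hdkr : ((d:ℕ):ℝ) ≤ (k:ℝ) := by exact_mod_cast hdk
    have hd0r : (0:ℝ) < d := by linarith
    have hc0r : (0:ℝ) < (cf u : ℝ) := by linarith
    have hretu : ret Sp T u = Real.log ((cf u : ℝ) / d) := by
      unfold ret
      rw [hTcode u h1 h2, hdeq, mul_div_mul_right _ _ hv1ne]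
    rw [hretu]
    have hub : (cf u : ℝ) / d ≤ (k:ℝ) := by
      rw [div_le_iff₀ hd0r]
      calc (cf u : ℝ) ≤ (k:ℝ) * 1 := by linarith
      _ ≤ (k:ℝ) * d := mul_le_mul_of_nonneg_left hd1r (by linarith)
    have hlb : (1:ℝ) / k ≤ (cf u : ℝ) / d := by
      rw [div_le_div_iff₀ hk0r hd0r]
      calc 1 * (d:ℝ) = (d:ℝ) := one_mul _
      _ ≤ (k:ℝ) := hdkr
      _ = 1 * (k:ℝ) := (one_mul _).symm
      _ ≤ (cf u : ℝ) * k := mul_le_mul_of_nonneg_right hc1r (by linarith)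
    have hup : Real.log ((cf u : ℝ) / d) ≤ Real.log k := Real.log_le_log (by positivity) hub
    have hdown : -Real.log k ≤ Real.log ((cf u : ℝ) / d) := by
      have := Real.log_le_log (by positivity : (0:ℝ) < 1 / k) hlb
      rw [one_div, Real.log_inv] at this
      exact this
    exact sq_le_sq' hdown hup
  -- ## comparing volatilities
  intro t ht
  rw [Finset.mem_Icc] at ht
  obtain ⟨ht2, htf⟩ := ht
  by_cases hcase : t ≤ P
  · -- volatility of T is zero up to time P
    have hz : ∀ i ∈ Finset.Icc 1 t, ret Sp T i = 0 := by
      intro i hi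
      rw [Finset.mem_Icc] at hi
      exact hretT0 i hi.1 (le_trans hi.2 hcase)
    have havg : avgRet Sp T t = 0 := by
      unfold avgRet
      rw [Finset.sum_eq_zero hz, zero_div]
    have hvolT : vol Sp T t = 0 := by
      unfold vol
      rw [havg, Finset.sum_eq_zero (fun i hi => by rw [hz i hi]; ring), zero_div,
        Real.sqrt_zero]
    rw [hvolT]
    exact mul_nonneg hβ.le (Real.sqrt_nonneg _)
  · push_neg at hcase
    have ht1r : (0:ℝ) < (t:ℝ) - 1 := by
      have : (2:ℝ) ≤ t := by exact_mod_cast ht2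
      linarith
    -- upper bound on the numerator for T
    have hTsum : ∑ i ∈ Finset.Icc 1 t, (ret Sp T i - avgRet Sp T t) ^ 2 ≤
        (s:ℝ) * (Real.log k) ^ 2 := by
      have hstep1 : ∑ i ∈ Finset.Icc 1 t, (ret Sp T i - avgRet Sp T t) ^ 2 ≤
          ∑ i ∈ Finset.Icc 1 t, (ret Sp T i) ^ 2 := by
        have := sum_sq_dev_le t (by omega) (ret Sp T)
        simpa [avgRet] using this
      have hsplit2 : ∑ i ∈ Finset.Icc 1 t, (ret Sp T i) ^ 2 =
          ∑ i ∈ Finset.Icc 1 P, (ret Sp T i) ^ 2 +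
          ∑ i ∈ Finset.Ioc P t, (ret Sp T i) ^ 2 := by
        have hIcc : ∀ x : ℕ, Finset.Icc 1 x = Finset.Ioc 0 x := fun x => by
          rw [← Finset.Icc_add_one_left_eq_Ioc, zero_add]
        rw [hIcc, hIcc]
        exact (Finset.sum_Ioc_consecutive _ (Nat.zero_le P) hcase.le).symm
      have hzero : ∑ i ∈ Finset.Icc 1 P, (ret Sp T i) ^ 2 = 0 :=
        Finset.sum_eq_zero (fun i hi => by
          rw [Finset.mem_Icc] at hi
          rw [hretT0 i hi.1 hi.2]; ring)
      have hbound : ∑ i ∈ Finset.Ioc P t, (ret Sp T i) ^ 2 ≤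
          ((t - P : ℕ):ℝ) * (Real.log k) ^ 2 := by
        have := Finset.sum_le_card_nsmul (Finset.Ioc P t) (fun i => (ret Sp T i) ^ 2)
          ((Real.log k) ^ 2) (fun i hi => by
            rw [Finset.mem_Ioc] at hi
            exact hretTbound i hi.1 (le_trans hi.2 htf))
        rw [Nat.card_Ioc, nsmul_eq_mul] at this
        exact this
      have htPs : ((t - P : ℕ):ℝ) ≤ (s:ℝ) := by
        have : t - P ≤ s := by omega
        exact_mod_cast this
      have hlogsq : (0:ℝ) ≤ (Real.log k) ^ 2 := sq_nonneg _
      calc ∑ i ∈ Finset.Icc 1 t, (ret Sp T i - avgRet Sp T t) ^ 2 ≤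
          ∑ i ∈ Finset.Icc 1 t, (ret Sp T i) ^ 2 := hstep1
      _ = 0 + ∑ i ∈ Finset.Ioc P t, (ret Sp T i) ^ 2 := by rw [hsplit2, hzero]
      _ ≤ ((t - P : ℕ):ℝ) * (Real.log k) ^ 2 := by rw [zero_add]; exact hbound
      _ ≤ (s:ℝ) * (Real.log k) ^ 2 := mul_le_mul_of_nonneg_right htPs hlogsq
    -- lower bound on the numerator for the market
    have hMsum : ((P:ℝ) - 2) * (Real.log Fr) ^ 2 ≤
        ∑ i ∈ Finset.Icc 1 t, (ret Sp (Finset.Icc 1 m) i -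
          avgRet Sp (Finset.Icc 1 m) t) ^ 2 := by
      set μ := avgRet Sp (Finset.Icc 1 m) t with hμdef
      set S2 : Finset ℕ := (Finset.Icc 1 (P / 2 - 1)).biUnion
        (fun j => ({2 * j, 2 * j + 1} : Finset ℕ)) with hS2
      have hsub : S2 ⊆ Finset.Icc 1 t := by
        intro x hx
        rw [hS2, Finset.mem_biUnion] at hx
        obtain ⟨j, hj, hxj⟩ := hx
        rw [Finset.mem_Icc] at hj
        simp only [Finset.mem_insert, Finset.mem_singleton] at hxj
        rw [Finset.mem_Icc]
        omega
      have hdisj2 : (↑(Finset.Icc 1 (P / 2 - 1)) : Set ℕ).PairwiseDisjoint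
          (fun j => ({2 * j, 2 * j + 1} : Finset ℕ)) := by
        intro a _ b _ hab
        simp only [Function.onFun, Finset.disjoint_left, Finset.mem_insert,
          Finset.mem_singleton]
        intro x hx hx'
        omega
      have hpair : ∀ j ∈ Finset.Icc 1 (P / 2 - 1),
          2 * (Real.log Fr) ^ 2 ≤
          ∑ i ∈ ({2 * j, 2 * j + 1} : Finset ℕ),
            (ret Sp (Finset.Icc 1 m) i - μ) ^ 2 := by
        intro j hj
        rw [Finset.mem_Icc] at hj
        rw [Finset.sum_pair (by omega : 2 * j ≠ 2 * j + 1)]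
        rw [hretMeven j hj.1 (by omega), hretModd j hj.1 (by omega)]
        nlinarith [sq_nonneg μ]
      have hchain : ((P / 2 - 1 : ℕ):ℝ) * (2 * (Real.log Fr) ^ 2) ≤
          ∑ i ∈ S2, (ret Sp (Finset.Icc 1 m) i - μ) ^ 2 := by
        rw [hS2, Finset.sum_biUnion hdisj2]
        calc ((P / 2 - 1 : ℕ):ℝ) * (2 * (Real.log Fr) ^ 2)
            = ∑ _j ∈ Finset.Icc 1 (P / 2 - 1), 2 * (Real.log Fr) ^ 2 := by
              rw [Finset.sum_const, Nat.card_Icc, Nat.add_sub_cancel, nsmul_eq_mul]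
        _ ≤ _ := Finset.sum_le_sum hpair
      have hcast : ((P / 2 - 1 : ℕ):ℝ) * (2 * (Real.log Fr) ^ 2) =
          ((P:ℝ) - 2) * (Real.log Fr) ^ 2 := by
        have h1 : ((P / 2 - 1 : ℕ):ℝ) * 2 = (P:ℝ) - 2 := by
          have h2 : (P / 2 - 1) * 2 = P - 2 := by omega
          have h3 : (((P / 2 - 1) * 2 : ℕ):ℝ) = ((P - 2 : ℕ):ℝ) :=
            congrArg Nat.cast h2
          rw [Nat.cast_mul, Nat.cast_sub (by omega : 2 ≤ P)] at h3
          push_cast at h3 ⊢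
          linarith
        calc ((P / 2 - 1 : ℕ):ℝ) * (2 * (Real.log Fr) ^ 2)
            = (((P / 2 - 1 : ℕ):ℝ) * 2) * (Real.log Fr) ^ 2 := by ring
        _ = ((P:ℝ) - 2) * (Real.log Fr) ^ 2 := by rw [h1]
      rw [hcast] at hchain
      refine le_trans hchain ?_
      exact Finset.sum_le_sum_of_subset_of_nonneg hsub (fun i _ _ => sq_nonneg _)
    -- put the two bounds together
    have hlogk0 : (0:ℝ) ≤ Real.log k := hlogk.le
    have hLqk : (q:ℝ) * Real.log k ≤ Real.log Fr := by
      have h1 : Real.log ((k:ℝ)^q) ≤ Real.log Fr :=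
        Real.log_le_log (by positivity) hFrkq
      rw [Real.log_pow] at h1
      push_cast at h1
      exact h1
    have hβL : 4 * Real.log k ≤ β * Real.log Fr := by
      have h1 : β * ((q:ℝ) * Real.log k) ≤ β * Real.log Fr :=
        mul_le_mul_of_nonneg_left hLqk hβ.le
      have h2 : 4 * Real.log k ≤ β * (q:ℝ) * Real.log k :=
        mul_le_mul_of_nonneg_right hβq hlogk0
      rw [mul_assoc] at h2
      linarith
    have hsPr : (s:ℝ) ≤ (P:ℝ) - 2 := by
      have : (s:ℝ) + 2 ≤ (P:ℝ) := by exact_mod_cast hPs2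
      linarith
    have hP2r : (0:ℝ) ≤ (P:ℝ) - 2 := by
      have : (4:ℝ) ≤ (P:ℝ) := by exact_mod_cast hP4
      linarith
    have hkey : ∑ i ∈ Finset.Icc 1 t, (ret Sp T i - avgRet Sp T t) ^ 2 ≤
        β ^ 2 * ∑ i ∈ Finset.Icc 1 t, (ret Sp (Finset.Icc 1 m) i -
          avgRet Sp (Finset.Icc 1 m) t) ^ 2 := by
      have h6 : (Real.log k) ^ 2 ≤ (β * Real.log Fr) ^ 2 := by
        exact pow_le_pow_left₀ hlogk0 (by linarith) 2
      have h7 := mul_le_mul_of_nonneg_left hMsum (sq_nonneg β)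
      have h8 : ((P:ℝ) - 2) * (Real.log k) ^ 2 ≤
          ((P:ℝ) - 2) * (β * Real.log Fr) ^ 2 :=
        mul_le_mul_of_nonneg_left h6 hP2r
      have h9 : (s:ℝ) * (Real.log k) ^ 2 ≤ ((P:ℝ) - 2) * (Real.log k) ^ 2 :=
        mul_le_mul_of_nonneg_right hsPr (sq_nonneg _)
      have h10 : ((P:ℝ) - 2) * (β * Real.log Fr) ^ 2 =
          β ^ 2 * (((P:ℝ) - 2) * (Real.log Fr) ^ 2) := by ring
      linarith [hTsum, h9, h8, h10, h7]
    unfold vol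
    have hdiv : (∑ i ∈ Finset.Icc 1 t, (ret Sp T i - avgRet Sp T t) ^ 2) /
        ((t:ℝ) - 1) ≤
        β ^ 2 * ((∑ i ∈ Finset.Icc 1 t, (ret Sp (Finset.Icc 1 m) i -
          avgRet Sp (Finset.Icc 1 m) t) ^ 2) / ((t:ℝ) - 1)) := by
      rw [mul_div_assoc']
      exact (div_le_div_iff_of_pos_right ht1r).mpr hkey
    calc Real.sqrt ((∑ i ∈ Finset.Icc 1 t, (ret Sp T i - avgRet Sp T t) ^ 2) /
        ((t:ℝ) - 1)) ≤
        Real.sqrt (β ^ 2 * ((∑ i ∈ Finset.Icc 1 t, (ret Sp (Finset.Icc 1 m) i -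
          avgRet Sp (Finset.Icc 1 m) t) ^ 2) / ((t:ℝ) - 1))) :=
      Real.sqrt_le_sqrt hdiv
    _ = β * Real.sqrt ((∑ i ∈ Finset.Icc 1 t, (ret Sp (Finset.Icc 1 m) i -
          avgRet Sp (Finset.Icc 1 m) t) ^ 2) / ((t:ℝ) - 1)) := by
      rw [Real.sqrt_mul (sq_nonneg β), Real.sqrt_sq hβ.le]
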